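/- Fix an integer k ≥ 2 and 0 < δ < 1/(2k). For every ε > 0 there is a constant C (depending only on k, δ, ε) such that for all positive integers q and all complex s with Re(s) ≥ −1 + δ, the function F*(s) = ∏_{p | q} (1 + (q,p^k)^s / p^{k(1+s)}) / (1 + 1/p^{k(1+s)}) · ∏_p (1 − 2 / (p^k (1 + (q,p^k)^s / p^{k(1+s)}))) is well defined (all the relevant products converge, no denominator vanishes) and satisfies |F*(s)| ≤ C q^ε. -/

import Mathlib

open Complex ArithmeticFunction

section Aux

open Filter

lemma hasProd_zero_of_eq_zero {ι : Type*} {f : ι → ℂ} (i₀ : ι) (h : f i₀ = 0) :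
    HasProd f 0 := by
  classical
  rw [HasProd]
  have hev : (fun A : Finset ι => ∏ i ∈ A, f i) =ᶠ[atTop] (fun _ => (0 : ℂ)) := by
    filter_upwards [eventually_ge_atTop ({i₀} : Finset ι)] with A hA
    exact Finset.prod_eq_zero (hA (Finset.mem_singleton_self i₀)) h
  exact tendsto_const_nhds.congr' hev.symm

lemma one_sub_norm_le_norm_one_add (w : ℂ) : 1 - ‖w‖ ≤ ‖1 + w‖ := by
  have h := norm_sub_le (1 + w) w
  simp only [add_sub_cancel_right, norm_one] at h
  linarith [h]

lemma one_add_ne_zero_of_norm_lt_one {w : ℂ} (h : ‖w‖ < 1) : 1 + w ≠ 0 := by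
  intro hz
  have := one_sub_norm_le_norm_one_add w
  rw [hz, norm_zero] at this
  linarith

lemma multipliable_and_norm_tprod_le {ι : Type*} {F : ι → ℂ} {b : ι → ℝ}
    (hb : Summable b) (hbnd : ∀ i, ‖F i - 1‖ ≤ b i) :
    Multipliable F ∧ ‖∏' i, F i‖ ≤ Real.exp (∑' i, b i) := by
  have hbnn : ∀ i, 0 ≤ b i := fun i => (norm_nonneg _).trans (hbnd i)
  by_cases hzero : ∃ i, F i = 0
  · obtain ⟨i₀, h0⟩ := hzero
    have hp : HasProd F 0 := hasProd_zero_of_eq_zero i₀ h0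
    refine ⟨hp.multipliable, ?_⟩
    rw [hp.tprod_eq, norm_zero]
    positivity
  · push_neg at hzero
    set S : Set ι := {i | ¬ b i ≤ 1/2} with hS
    have hSfin : S.Finite := by
      have hev : ∀ᶠ i in cofinite, b i ≤ 1/2 :=
        (hb.tendsto_cofinite_zero.eventually_lt_const (by norm_num : (0:ℝ) < 1/2)).mono
          (fun i hi => hi.le)
      exact Filter.eventually_cofinite.mp hev
    have hlog : Summable fun i => Complex.log (F i) := by
      rw [← hSfin.summable_compl_iff]
      apply Summable.of_norm_bounded ((hb.comp_injective Subtype.val_injective).mul_left (3/2))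
      intro i
      simp only [Function.comp_apply]
      have hib : b ↑i ≤ 1/2 := not_not.mp i.2
      have h1 : ‖F ↑i - 1‖ ≤ 1/2 := (hbnd _).trans hib
      have h2 : ‖Complex.log (F ↑i)‖ ≤ 3/2 * ‖F ↑i - 1‖ := by
        have := Complex.norm_log_one_add_half_le_self (z := F ↑i - 1) (by exact_mod_cast h1)
        rwa [add_sub_cancel] at this
      calc ‖Complex.log (F ↑i)‖ ≤ 3/2 * ‖F ↑i - 1‖ := h2
        _ ≤ 3/2 * b ↑i := by gcongr; exact hbnd _
    have heq : cexp (∑' i, Complex.log (F i)) = ∏' i, F i :=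
      Complex.cexp_tsum_eq_tprod hzero hlog
    have hmult : Multipliable F :=
      Complex.multipliable_of_summable_log hlog
    refine ⟨hmult, ?_⟩
    rw [← heq, Complex.norm_exp]
    apply Real.exp_le_exp.mpr
    rw [Complex.re_tsum hlog]
    have hsumre : Summable fun i => (Complex.log (F i)).re :=
      (Complex.hasSum_re hlog.hasSum).summable
    apply Summable.tsum_le_tsum _ hsumre hb
    intro i
    rw [Complex.log_re]
    have h3 : ‖F i‖ - 1 ≤ ‖F i - 1‖ := by
      have := norm_sub_norm_le (F i) (1 : ℂ)
      simpa using this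
    have h4 : Real.log ‖F i‖ ≤ ‖F i‖ - 1 :=
      Real.log_le_sub_one_of_pos (norm_pos_iff.mpr (hzero i))
    linarith [hbnd i]

lemma re_k_mul (k : ℕ) (s : ℂ) : ((k : ℂ) * (1 + s)).re = (k : ℝ) * (1 + s.re) := by
  simp [Complex.mul_re]

lemma norm_p_cpow {p : ℕ} (hp : 0 < p) (k : ℕ) (s : ℂ) :
    ‖(p : ℂ) ^ ((k : ℂ) * (1 + s))‖ = (p : ℝ) ^ ((k : ℝ) * (1 + s.re)) := by
  rw [Complex.norm_natCast_cpow_of_pos hp, re_k_mul]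

lemma num_norm_le {k : ℕ} (hk : 2 ≤ k) {δ : ℝ} (hδ0 : 0 < δ) (hδ1 : δ ≤ 1)
    {p : ℕ} (hp : p.Prime) {s : ℂ} (hs : -1 + δ ≤ s.re)
    {g : ℕ} (hg1 : 1 ≤ g) (hgle : g ≤ p ^ k) :
    ‖(g : ℂ) ^ s / (p : ℂ) ^ ((k : ℂ) * (1 + s))‖ ≤ (2 : ℝ) ^ (-((k : ℝ) * δ)) := by
  have hp2 : (2 : ℝ) ≤ (p : ℝ) := by exact_mod_cast hp.two_le
  have hp1 : (1 : ℝ) ≤ (p : ℝ) := by linarith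
  have hp0 : (0 : ℝ) < (p : ℝ) := by linarith
  have hδσ : δ ≤ 1 + s.re := by linarith
  have hk0 : (0 : ℝ) < (k : ℝ) := by positivity
  have hnum : ‖(g : ℂ) ^ s‖ = (g : ℝ) ^ s.re :=
    Complex.norm_natCast_cpow_of_pos (by omega) s
  rw [norm_div, hnum, norm_p_cpow hp.pos]
  have key : (g : ℝ) ^ s.re / (p : ℝ) ^ ((k : ℝ) * (1 + s.re)) ≤ (p : ℝ) ^ (-((k : ℝ) * δ)) := by
    rcases le_or_gt 0 s.re with hσ | hσ
    · have h1 : (g : ℝ) ^ s.re ≤ (p : ℝ) ^ ((k : ℝ) * s.re) := by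
        have : (g : ℝ) ≤ (p : ℝ) ^ (k : ℝ) := by
          rw [Real.rpow_natCast]; exact_mod_cast hgle
        calc (g : ℝ) ^ s.re ≤ ((p : ℝ) ^ (k : ℝ)) ^ s.re :=
              Real.rpow_le_rpow (by positivity) this hσ
          _ = (p : ℝ) ^ ((k : ℝ) * s.re) := by
              rw [← Real.rpow_mul hp0.le]
      calc (g : ℝ) ^ s.re / (p : ℝ) ^ ((k : ℝ) * (1 + s.re))
          ≤ (p : ℝ) ^ ((k : ℝ) * s.re) / (p : ℝ) ^ ((k : ℝ) * (1 + s.re)) := by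
            gcongr
        _ = (p : ℝ) ^ ((k : ℝ) * s.re - (k : ℝ) * (1 + s.re)) := by
            rw [Real.rpow_sub hp0]
        _ ≤ (p : ℝ) ^ (-((k : ℝ) * δ)) := by
            apply Real.rpow_le_rpow_of_exponent_le hp1
            have : (k : ℝ) * δ ≤ (k : ℝ) * 1 := by
              apply mul_le_mul_of_nonneg_left hδ1 hk0.le
            nlinarith
    · have h1 : (g : ℝ) ^ s.re ≤ 1 := by
        apply Real.rpow_le_one_of_one_le_of_nonpos (by exact_mod_cast hg1) hσ.le
      calc (g : ℝ) ^ s.re / (p : ℝ) ^ ((k : ℝ) * (1 + s.re))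
          ≤ 1 / (p : ℝ) ^ ((k : ℝ) * (1 + s.re)) := by
            gcongr
        _ = (p : ℝ) ^ (-((k : ℝ) * (1 + s.re))) := by
            rw [Real.rpow_neg hp0.le, one_div]
        _ ≤ (p : ℝ) ^ (-((k : ℝ) * δ)) := by
            apply Real.rpow_le_rpow_of_exponent_le hp1
            have : (k : ℝ) * δ ≤ (k : ℝ) * (1 + s.re) :=
              mul_le_mul_of_nonneg_left hδσ hk0.le
            linarith
  refine key.trans ?_
  rw [Real.rpow_neg hp0.le, Real.rpow_neg (by norm_num : (0:ℝ) ≤ 2)]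
  apply inv_anti₀
  · positivity
  · exact Real.rpow_le_rpow (by norm_num) hp2 (by positivity)

end Aux

/-- The function `F*(s)` from the paper. -/
noncomputable def Fstar (k q : ℕ) (s : ℂ) : ℂ :=
  (∏ p ∈ q.primeFactors,
      (1 + (Nat.gcd q (p ^ k) : ℂ) ^ s / (p : ℂ) ^ ((k : ℂ) * (1 + s))) /
        (1 + 1 / (p : ℂ) ^ ((k : ℂ) * (1 + s)))) *
    ∏' p : Nat.Primes,
      (1 - 2 / (((p : ℕ) : ℂ) ^ k *
        (1 + (Nat.gcd q ((p : ℕ) ^ k) : ℂ) ^ s / ((p : ℕ) : ℂ) ^ ((k : ℂ) * (1 + s)))))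

theorem statement1 (k : ℕ) (hk : 2 ≤ k) (δ : ℝ) (hδ0 : 0 < δ) (hδ : δ < 1 / (2 * k))
    (ε : ℝ) (hε : 0 < ε) :
    ∃ C > 0, ∀ q : ℕ, 0 < q → ∀ s : ℂ, -1 + δ ≤ s.re →
      (∀ p : ℕ, p.Prime →
        (1 + 1 / (p : ℂ) ^ ((k : ℂ) * (1 + s))) ≠ 0 ∧
        (1 + (Nat.gcd q (p ^ k) : ℂ) ^ s / (p : ℂ) ^ ((k : ℂ) * (1 + s))) ≠ 0) ∧
      Multipliable (fun p : Nat.Primes =>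
        (1 - 2 / (((p : ℕ) : ℂ) ^ k *
          (1 + (Nat.gcd q ((p : ℕ) ^ k) : ℂ) ^ s / ((p : ℕ) : ℂ) ^ ((k : ℂ) * (1 + s)))))) ∧
      ‖Fstar k q s‖ ≤ C * (q : ℝ) ^ ε := by
  have hk0 : (0 : ℝ) < (k : ℝ) := by positivity
  have hk2 : (2 : ℝ) ≤ (k : ℝ) := by exact_mod_cast hk
  have hδ1 : δ ≤ 1 := by
    have h1 : 1 / (2 * (k : ℝ)) ≤ 1 := by
      rw [div_le_one (by linarith)]
      linarith
    linarith
  set r : ℝ := (2 : ℝ) ^ (-((k : ℝ) * δ)) with hrdef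
  have hr0 : 0 < r := Real.rpow_pos_of_pos two_pos _
  have hr1 : r < 1 := by
    apply Real.rpow_lt_one_of_one_lt_of_neg one_lt_two
    have : 0 < (k : ℝ) * δ := by positivity
    linarith
  set c : ℝ := 1 - r with hcdef
  have hc0 : 0 < c := by rw [hcdef]; linarith
  set M : ℝ := 2 / c + 1 with hMdef
  have hM1 : 1 ≤ M := by
    have : 0 ≤ 2 / c := by positivity
    rw [hMdef]; linarith
  have hM0 : 0 < M := by linarith
  set P : ℕ := ⌈M ^ (1 / ε)⌉₊ with hPdef
  set b : Nat.Primes → ℝ := fun p => (2 / c) / ((p : ℕ) : ℝ) ^ 2 with hbdef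
  have hbsum : Summable b := by
    have h1 : Summable (fun n : ℕ => 1 / (n : ℝ) ^ 2) :=
      Real.summable_one_div_nat_pow.mpr one_lt_two
    have h2 : Summable (fun n : ℕ => (2 / c) * (1 / (n : ℝ) ^ 2)) := h1.mul_left _
    apply (h2.comp_injective Subtype.val_injective).congr
    intro p
    simp only [Function.comp_apply, hbdef]
    ring
  set E : ℝ := Real.exp (∑' p, b p) with hEdef
  have hE0 : 0 < E := Real.exp_pos _
  refine ⟨M ^ P * E, by positivity, ?_⟩
  intro q hq s hs
  -- per-prime norm bounds
  have keyg : ∀ p : ℕ, p.Prime →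
      ‖(Nat.gcd q (p ^ k) : ℂ) ^ s / (p : ℂ) ^ ((k : ℂ) * (1 + s))‖ ≤ r := by
    intro p hp
    exact num_norm_le hk hδ0 hδ1 hp hs
      (Nat.gcd_pos_of_pos_left _ hq) (Nat.le_of_dvd (pow_pos hp.pos k) (Nat.gcd_dvd_right _ _))
  have key1 : ∀ p : ℕ, p.Prime → ‖1 / (p : ℂ) ^ ((k : ℂ) * (1 + s))‖ ≤ r := by
    intro p hp
    have := num_norm_le (g := 1) hk hδ0 hδ1 hp hs le_rfl (Nat.one_le_two_pow.trans
      (Nat.pow_le_pow_left hp.two_le k))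
    simpa using this
  -- norm lower bounds for the denominators
  have hAlow : ∀ p : ℕ, p.Prime →
      c ≤ ‖1 + (Nat.gcd q (p ^ k) : ℂ) ^ s / (p : ℂ) ^ ((k : ℂ) * (1 + s))‖ := by
    intro p hp
    have := one_sub_norm_le_norm_one_add
      ((Nat.gcd q (p ^ k) : ℂ) ^ s / (p : ℂ) ^ ((k : ℂ) * (1 + s)))
    have h2 := keyg p hp
    rw [hcdef]; linarith
  have hAup : ∀ p : ℕ, p.Prime →
      ‖1 + (Nat.gcd q (p ^ k) : ℂ) ^ s / (p : ℂ) ^ ((k : ℂ) * (1 + s))‖ ≤ 2 := by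
    intro p hp
    have h1 := norm_add_le (1 : ℂ)
      ((Nat.gcd q (p ^ k) : ℂ) ^ s / (p : ℂ) ^ ((k : ℂ) * (1 + s)))
    have h2 := keyg p hp
    simp only [norm_one] at h1
    linarith
  have hBlow : ∀ p : ℕ, p.Prime →
      c ≤ ‖1 + 1 / (p : ℂ) ^ ((k : ℂ) * (1 + s))‖ := by
    intro p hp
    have := one_sub_norm_le_norm_one_add (1 / (p : ℂ) ^ ((k : ℂ) * (1 + s)))
    have h2 := key1 p hp
    rw [hcdef]; linarith
  refine ⟨?_, ?_⟩
  · intro p hp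
    exact ⟨one_add_ne_zero_of_norm_lt_one (lt_of_le_of_lt (key1 p hp) hr1),
      one_add_ne_zero_of_norm_lt_one (lt_of_le_of_lt (keyg p hp) hr1)⟩
  -- infinite product
  have hbnd : ∀ p : Nat.Primes,
      ‖(1 - 2 / (((p : ℕ) : ℂ) ^ k *
        (1 + (Nat.gcd q ((p : ℕ) ^ k) : ℂ) ^ s / ((p : ℕ) : ℂ) ^ ((k : ℂ) * (1 + s))))) - 1‖
        ≤ b p := by
    intro p
    obtain ⟨p, hp⟩ := p
    simp only [hbdef]
    have hA := hAlow p hp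
    have hp1 : (1 : ℝ) ≤ (p : ℝ) := by exact_mod_cast hp.one_lt.le
    have hpk : ((p : ℝ)) ^ 2 ≤ ((p : ℝ)) ^ k := by
      apply pow_le_pow_right₀ hp1 hk
    have heq : (1 - 2 / (((p : ℕ) : ℂ) ^ k *
        (1 + (Nat.gcd q ((p : ℕ) ^ k) : ℂ) ^ s / ((p : ℕ) : ℂ) ^ ((k : ℂ) * (1 + s))))) - 1
        = -(2 / (((p : ℕ) : ℂ) ^ k *
        (1 + (Nat.gcd q ((p : ℕ) ^ k) : ℂ) ^ s / ((p : ℕ) : ℂ) ^ ((k : ℂ) * (1 + s))))) := by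
      ring
    rw [heq, norm_neg, norm_div, norm_mul, norm_pow]
    have hnp : ‖((p : ℕ) : ℂ)‖ = (p : ℝ) := by
      simp
    rw [hnp]
    have hnorm2 : ‖(2 : ℂ)‖ = 2 := by norm_num
    rw [hnorm2]
    have hden : (p : ℝ) ^ 2 * c ≤ (p : ℝ) ^ k *
        ‖1 + (Nat.gcd q (p ^ k) : ℂ) ^ s / (p : ℂ) ^ ((k : ℂ) * (1 + s))‖ := by
      apply mul_le_mul hpk hA hc0.le (by positivity)
    calc 2 / ((p : ℝ) ^ k *
          ‖1 + (Nat.gcd q (p ^ k) : ℂ) ^ s / (p : ℂ) ^ ((k : ℂ) * (1 + s))‖)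
        ≤ 2 / ((p : ℝ) ^ 2 * c) := by
          apply div_le_div_of_nonneg_left (by norm_num) (by positivity) hden
      _ = 2 / c / (p : ℝ) ^ 2 := by rw [div_div, mul_comm]
  obtain ⟨hmult, htp⟩ := multipliable_and_norm_tprod_le hbsum hbnd
  refine ⟨hmult, ?_⟩
  -- finite product bound
  have hfin : ‖∏ p ∈ q.primeFactors,
      (1 + (Nat.gcd q (p ^ k) : ℂ) ^ s / (p : ℂ) ^ ((k : ℂ) * (1 + s))) /
        (1 + 1 / (p : ℂ) ^ ((k : ℂ) * (1 + s)))‖ ≤ M ^ P * (q : ℝ) ^ ε := by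
    rw [norm_prod]
    have hratio : ∀ p ∈ q.primeFactors,
        ‖(1 + (Nat.gcd q (p ^ k) : ℂ) ^ s / (p : ℂ) ^ ((k : ℂ) * (1 + s))) /
          (1 + 1 / (p : ℂ) ^ ((k : ℂ) * (1 + s)))‖ ≤ M := by
      intro p hpF
      have hp := Nat.prime_of_mem_primeFactors hpF
      rw [norm_div]
      have h1 : ‖1 + (Nat.gcd q (p ^ k) : ℂ) ^ s / (p : ℂ) ^ ((k : ℂ) * (1 + s))‖ /
          ‖1 + 1 / (p : ℂ) ^ ((k : ℂ) * (1 + s))‖ ≤ 2 / c :=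
        div_le_div₀ (by norm_num) (hAup p hp) hc0 (hBlow p hp)
      rw [hMdef]; linarith
    calc ∏ p ∈ q.primeFactors,
          ‖(1 + (Nat.gcd q (p ^ k) : ℂ) ^ s / (p : ℂ) ^ ((k : ℂ) * (1 + s))) /
            (1 + 1 / (p : ℂ) ^ ((k : ℂ) * (1 + s)))‖
        ≤ ∏ p ∈ q.primeFactors, (if p < P then M else (p : ℝ) ^ ε) := by
          apply Finset.prod_le_prod (fun _ _ => norm_nonneg _)
          intro p hpF
          by_cases hcase : p < P
          · rw [if_pos hcase]; exact hratio p hpF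
          · rw [if_neg hcase]
            refine (hratio p hpF).trans ?_
            push_neg at hcase
            have hMP : M ^ (1 / ε) ≤ (P : ℝ) := Nat.le_ceil _
            have hPp : (P : ℝ) ≤ (p : ℝ) := by exact_mod_cast hcase
            have hMeq : (M ^ (1 / ε)) ^ ε = M := by
              rw [← Real.rpow_mul hM0.le, one_div_mul_cancel hε.ne', Real.rpow_one]
            calc M = (M ^ (1 / ε)) ^ ε := hMeq.symm
              _ ≤ (p : ℝ) ^ ε := Real.rpow_le_rpow (by positivity) (hMP.trans hPp) hε.le
      _ = (∏ p ∈ q.primeFactors.filter (· < P), M) *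
            ∏ p ∈ q.primeFactors.filter (fun p => ¬ p < P), (p : ℝ) ^ ε :=
          Finset.prod_ite _ _
      _ ≤ M ^ P * (q : ℝ) ^ ε := by
          have hc1 : (q.primeFactors.filter (· < P)).card ≤ P := by
            calc (q.primeFactors.filter (· < P)).card
                ≤ (Finset.range P).card := Finset.card_le_card (by
                  intro x hx
                  exact Finset.mem_range.mpr (Finset.mem_filter.mp hx).2)
              _ = P := Finset.card_range P
          have hfirst : ∏ p ∈ q.primeFactors.filter (· < P), M ≤ M ^ P := by
            rw [Finset.prod_const]
            exact pow_le_pow_right₀ hM1 hc1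
          have hsecond : ∏ p ∈ q.primeFactors.filter (fun p => ¬ p < P), (p : ℝ) ^ ε
              ≤ (q : ℝ) ^ ε := by
            calc ∏ p ∈ q.primeFactors.filter (fun p => ¬ p < P), (p : ℝ) ^ ε
                ≤ ∏ p ∈ q.primeFactors, (p : ℝ) ^ ε := by
                  have hone : ∀ p ∈ q.primeFactors, (1 : ℝ) ≤ (p : ℝ) ^ ε := by
                    intro p hpF
                    have hp1 : (1 : ℝ) ≤ (p : ℝ) := by
                      exact_mod_cast (Nat.prime_of_mem_primeFactors hpF).one_lt.le
                    calc (1 : ℝ) = (p : ℝ) ^ (0 : ℝ) := (Real.rpow_zero _).symm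
                      _ ≤ (p : ℝ) ^ ε := Real.rpow_le_rpow_of_exponent_le hp1 hε.le
                  rw [← Finset.prod_sdiff (Finset.filter_subset (fun p => ¬ p < P) q.primeFactors)]
                  apply le_mul_of_one_le_left
                  · exact Finset.prod_nonneg fun p hpF => by positivity
                  · calc (1:ℝ)
                        = ∏ p ∈ q.primeFactors \ q.primeFactors.filter (fun p => ¬ p < P), (1:ℝ) :=
                          (Finset.prod_const_one).symm
                      _ ≤ ∏ p ∈ q.primeFactors \ q.primeFactors.filter (fun p => ¬ p < P), (p : ℝ) ^ ε :=
                        Finset.prod_le_prod (fun _ _ => zero_le_one)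
                          (fun p hpF => hone p (Finset.mem_sdiff.mp hpF).1)
              _ = (∏ p ∈ q.primeFactors, (p : ℝ)) ^ ε :=
                  Real.finset_prod_rpow _ _ (fun _ _ => Nat.cast_nonneg _) _
              _ ≤ (q : ℝ) ^ ε := by
                  apply Real.rpow_le_rpow (Finset.prod_nonneg fun _ _ => Nat.cast_nonneg _)
                    ?_ hε.le
                  rw [← Nat.cast_prod]
                  exact_mod_cast Nat.le_of_dvd hq (Nat.prod_primeFactors_dvd q)
          have hpos : (0:ℝ) ≤ ∏ p ∈ q.primeFactors.filter (fun p => ¬ p < P), (p : ℝ) ^ ε :=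
            Finset.prod_nonneg fun _ _ => by positivity
          exact mul_le_mul hfirst hsecond hpos (by positivity)
  -- assemble
  rw [Fstar, norm_mul]
  calc ‖∏ p ∈ q.primeFactors,
        (1 + (Nat.gcd q (p ^ k) : ℂ) ^ s / (p : ℂ) ^ ((k : ℂ) * (1 + s))) /
          (1 + 1 / (p : ℂ) ^ ((k : ℂ) * (1 + s)))‖ *
      ‖∏' p : Nat.Primes, (1 - 2 / (((p : ℕ) : ℂ) ^ k *
        (1 + (Nat.gcd q ((p : ℕ) ^ k) : ℂ) ^ s / ((p : ℕ) : ℂ) ^ ((k : ℂ) * (1 + s)))))‖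
      ≤ (M ^ P * (q : ℝ) ^ ε) * E :=
        mul_le_mul hfin htp (norm_nonneg _) (by positivity)
    _ = (M ^ P * E) * (q : ℝ) ^ ε := by ring
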